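/- Let φ be the ring endomorphism of Q[t₁,...,t₈] with φ(tᵢ) = tᵢ - (1/4)c₁, where c₁ = t₁+⋯+t₈, and let cᵢ be the elementary symmetric polynomials. Then for every 3 ≤ i ≤ 8, φ(cᵢ) ≡ cᵢ - ((9-i)/4)·c_{i-1}·c₁ modulo the ideal (c₁²). -/
import Mathlib


open MvPolynomial Finset

/-- `c i`: the `i`-th elementary symmetric polynomial in `t₁,…,t₈`. -/
noncomputable def c (i : ℕ) : MvPolynomial (Fin 8) ℚ :=
  ∑ s ∈ Finset.powersetCard i (Finset.univ : Finset (Fin 8)), ∏ j ∈ s, X j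

/-- `q i`: the `i`-th elementary symmetric polynomial in `t₁²,…,t₈²`. -/
noncomputable def q (i : ℕ) : MvPolynomial (Fin 8) ℚ :=
  ∑ s ∈ Finset.powersetCard i (Finset.univ : Finset (Fin 8)), ∏ j ∈ s, (X j) ^ 2

/-- `e6 = t₁t₂t₃t₄t₅t₆`. -/
noncomputable def e6 : MvPolynomial (Fin 8) ℚ :=
  X 0 * X 1 * X 2 * X 3 * X 4 * X 5

/-- The algebra endomorphism `φ` with `φ(tᵢ) = tᵢ - (1/4)(t₁+⋯+t₈)`. -/
noncomputable def phi : MvPolynomial (Fin 8) ℚ →ₐ[ℚ] MvPolynomial (Fin 8) ℚ :=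
  aeval (fun i : Fin 8 => X i - C (1/4 : ℚ) * ∑ j : Fin 8, X j)

lemma prod_sub_mem {R ι : Type*} [CommRing R] [DecidableEq ι] (s : Finset ι)
    (f : ι → R) (a : R) :
    ∏ j ∈ s, (f j - a) - (∏ j ∈ s, f j - a * ∑ j ∈ s, ∏ k ∈ s.erase j, f k) ∈
      Ideal.span {a ^ 2} := by
  induction s using Finset.induction_on with
  | empty => simp
  | @insert x s hx ih =>
    have h1 : ∑ j ∈ s, ∏ k ∈ (insert x s).erase j, f k
        = ∑ j ∈ s, f x * ∏ k ∈ s.erase j, f k := by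
      refine Finset.sum_congr rfl fun j hj => ?_
      rw [Finset.erase_insert_of_ne (by rintro rfl; exact hx hj),
        Finset.prod_insert (fun h => hx (Finset.mem_of_mem_erase h))]
    rw [Finset.prod_insert hx, Finset.prod_insert hx, Finset.sum_insert hx,
      Finset.erase_insert hx, h1]
    set P := ∏ j ∈ s, f j with hP
    set S := ∑ j ∈ s, ∏ k ∈ s.erase j, f k with hS
    set r := ∏ j ∈ s, (f j - a) - (P - a * S) with hr
    have hprod : ∏ j ∈ s, (f j - a) = (P - a * S) + r := by rw [hr]; ring
    have key : (f x - a) * ∏ j ∈ s, (f j - a)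
        - (f x * P - a * (P + ∑ j ∈ s, f x * ∏ k ∈ s.erase j, f k))
        = a ^ 2 * S + (f x - a) * r := by
      rw [hprod, ← Finset.mul_sum, ← hS]; ring
    rw [key]
    exact Ideal.add_mem _
      (Ideal.mul_mem_right _ _ (Ideal.subset_span (Set.mem_singleton _)))
      (Ideal.mul_mem_left _ _ ih)

lemma dc {M ι : Type*} [AddCommMonoid M] [DecidableEq ι] (u : Finset ι) (i : ℕ)
    (hi : 1 ≤ i) (g : Finset ι → M) :
    ∑ s ∈ u.powersetCard i, ∑ j ∈ s, g (s.erase j)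
      = ∑ t ∈ u.powersetCard (i - 1), ∑ _j ∈ u \ t, g t := by
  rw [Finset.sum_sigma', Finset.sum_sigma']
  refine Finset.sum_nbij' (fun p => ⟨p.1.erase p.2, p.2⟩)
    (fun p => ⟨insert p.2 p.1, p.2⟩) ?_ ?_ ?_ ?_ ?_
  · rintro ⟨s, j⟩ hp
    simp only [Finset.mem_sigma, Finset.mem_powersetCard] at hp ⊢
    obtain ⟨⟨hsub, hcard⟩, hj⟩ := hp
    refine ⟨⟨(Finset.erase_subset _ _).trans hsub, ?_⟩, ?_⟩
    · rw [Finset.card_erase_of_mem hj, hcard]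
    · simp [Finset.mem_sdiff, hsub hj]
  · rintro ⟨t, j⟩ hp
    simp only [Finset.mem_sigma, Finset.mem_powersetCard, Finset.mem_sdiff] at hp ⊢
    obtain ⟨⟨hsub, hcard⟩, hj, hjt⟩ := hp
    refine ⟨⟨Finset.insert_subset hj hsub, ?_⟩, Finset.mem_insert_self _ _⟩
    rw [Finset.card_insert_of_notMem hjt, hcard]
    omega
  · rintro ⟨s, j⟩ hp
    simp only [Finset.mem_sigma] at hp
    simp [Finset.insert_erase hp.2]
  · rintro ⟨t, j⟩ hp
    simp only [Finset.mem_sigma, Finset.mem_sdiff] at hp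
    simp [Finset.erase_insert hp.2.2]
  · rintro ⟨s, j⟩ _
    rfl

lemma c_one : c 1 = ∑ j : Fin 8, X (R := ℚ) j := by
  simp [c, Finset.powersetCard_one, Finset.sum_map]

theorem stmt2 :
    ∀ i : ℕ, 3 ≤ i → i ≤ 8 →
      phi (c i) - (c i - C (((9 : ℚ) - i) / 4) * c (i - 1) * c 1) ∈
        Ideal.span {c 1 ^ 2} := by
  intro i h3 h8
  set a : MvPolynomial (Fin 8) ℚ := C (1/4 : ℚ) * c 1 with ha
  have hphi : phi (c i)
      = ∑ s ∈ Finset.powersetCard i (Finset.univ : Finset (Fin 8)),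
          ∏ j ∈ s, (X j - a) := by
    rw [ha, c_one]
    simp only [phi, c, map_sum, map_prod, aeval_X]
  set D := ∑ s ∈ Finset.powersetCard i (Finset.univ : Finset (Fin 8)),
      ∑ j ∈ s, ∏ k ∈ s.erase j, X (R := ℚ) k with hD
  have hmem : phi (c i) - (c i - a * D) ∈ Ideal.span {a ^ 2} := by
    have key : phi (c i) - (c i - a * D)
        = ∑ s ∈ Finset.powersetCard i (Finset.univ : Finset (Fin 8)),
            (∏ j ∈ s, (X j - a)
              - (∏ j ∈ s, X j - a * ∑ j ∈ s, ∏ k ∈ s.erase j, X k)) := by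
      rw [hphi, hD, c, Finset.mul_sum]
      simp only [Finset.sum_sub_distrib]
    rw [key]
    exact Ideal.sum_mem _ fun s _ => prod_sub_mem s X a
  have hDval : D = (9 - i : ℕ) • c (i - 1) := by
    rw [hD, dc (Finset.univ : Finset (Fin 8)) i (by omega) (fun t => ∏ k ∈ t, X (R := ℚ) k), c, Finset.smul_sum]
    refine Finset.sum_congr rfl fun t ht => ?_
    rw [Finset.sum_const]
    congr 1
    rw [Finset.mem_powersetCard] at ht
    rw [Finset.card_sdiff_of_subset (Finset.subset_univ t), ht.2]
    simp only [Finset.card_univ, Fintype.card_fin]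
    omega
  have haD : a * D = C (((9 : ℚ) - i) / 4) * c (i - 1) * c 1 := by
    rw [hDval, ha, nsmul_eq_mul]
    have h9 : ((9 - i : ℕ) : MvPolynomial (Fin 8) ℚ) = C ((9 : ℚ) - i) := by
      rw [← MvPolynomial.C_eq_coe_nat]
      congr 1
      push_cast [Nat.cast_sub (by omega : i ≤ 9)]
      ring
    rw [h9]
    have h4 : (((9 : ℚ) - i) / 4) = (1/4 : ℚ) * ((9 : ℚ) - i) := by ring
    rw [h4, C_mul]
    ring
  have hsub : Ideal.span {a ^ 2} ≤ Ideal.span {c 1 ^ 2} := by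
    rw [Ideal.span_le, Set.singleton_subset_iff]
    have : a ^ 2 = C (1/4 : ℚ) ^ 2 * c 1 ^ 2 := by rw [ha]; ring
    rw [this]
    exact Ideal.mul_mem_left _ _ (Ideal.subset_span (Set.mem_singleton _))
  rw [← haD]
  exact hsub hmem
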